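/- Let E : ℝ → ℝ be continuously differentiable, satisfy the Kneser difference equation E(x+1) = Real.exp (E x) for all x ≥ 0, tend to +∞ as x → +∞, and have deriv E x > 0 for all sufficiently large x. Then deriv E x < (E x)^3 for all sufficiently large x. -/

import Mathlib

open Filter

/-- For a `C¹` solution of the Kneser difference equation tending to `+∞`
with eventually positive derivative, `E' x < (E x) ^ 3` eventually. -/
theorem kneser_deriv_lt_cube (E : ℝ → ℝ)
    (hE : ContDiff ℝ 1 E)
    (hK : ∀ x : ℝ, 0 ≤ x → E (x + 1) = Real.exp (E x))
    (htop : Tendsto E atTop atTop)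
    (hpos : ∀ᶠ x : ℝ in atTop, 0 < deriv E x) :
    ∀ᶠ x : ℝ in atTop, deriv E x < E x ^ 3 := by
  have hd : Differentiable ℝ E := hE.differentiable one_ne_zero
  have hdc : Continuous (deriv E) := hE.continuous_deriv le_rfl
  -- basic exponential inequalities
  have hlt : ∀ t : ℝ, t < Real.exp t := fun t => by
    have := Real.add_one_le_exp t; linarith
  have htwo : ∀ t : ℝ, 2 * t ≤ Real.exp t := fun t => by
    have h := Real.add_one_le_exp (t - Real.log 2)
    rw [Real.exp_sub, Real.exp_log (by norm_num : (0:ℝ) < 2)] at h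
    have hl : Real.log 2 ≤ 1 := by
      have := Real.log_le_sub_one_of_pos (by norm_num : (0:ℝ) < 2); linarith
    have hp := Real.exp_pos t
    nlinarith
  -- choose a base point a ≥ 1 past which deriv E > 0 and E ≥ 1
  have hcomb : ∀ᶠ x : ℝ in atTop, 0 < deriv E x ∧ 1 ≤ E x :=
    hpos.and (htop.eventually_ge_atTop 1)
  rw [eventually_atTop] at hcomb
  obtain ⟨a₀, ha₀⟩ := hcomb
  set a : ℝ := max a₀ 1 with ha_def
  have ha1 : (1:ℝ) ≤ a := le_max_right _ _
  have hape : ∀ x, a ≤ x → 0 < deriv E x ∧ 1 ≤ E x := fun x hx =>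
    ha₀ x (le_trans (le_max_left _ _) hx)
  -- derivative recurrence
  have hrec : ∀ x : ℝ, 1 ≤ x → deriv E (x + 1) = Real.exp (E x) * deriv E x := by
    intro x hx
    have h2 : HasDerivAt (fun t => Real.exp (E t)) (Real.exp (E x) * deriv E x) x :=
      (hd x).hasDerivAt.exp
    have heq : (fun t => E (t + 1)) =ᶠ[nhds x] fun t => Real.exp (E t) := by
      filter_upwards [eventually_gt_nhds (show (0:ℝ) < x by linarith)] with t ht
      exact hK t ht.le
    have h1 : HasDerivAt (fun t => E (t + 1)) (deriv E (x + 1)) x := by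
      have := ((hd (x+1)).hasDerivAt).comp x ((hasDerivAt_id x).add_const 1)
      simpa [Function.comp_def] using this
    exact h1.unique (h2.congr_of_eventuallyEq heq)
  -- E is monotone on [a, ∞)
  have hmono : MonotoneOn E (Set.Ici a) := by
    have : StrictMonoOn E (Set.Ici a) := by
      apply strictMonoOn_of_deriv_pos (convex_Ici a) hd.continuous.continuousOn
      intro x hx
      rw [interior_Ici] at hx
      exact (hape x hx.le).1
    exact this.monotoneOn
  -- M : max of deriv E on [a, a+1]
  obtain ⟨z, hz, hzmax⟩ := (isCompact_Icc (a := a) (b := a+1)).exists_isMaxOn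
    (Set.nonempty_Icc.2 (by linarith)) hdc.continuousOn
  set M : ℝ := deriv E z with hM_def
  have hM : ∀ y ∈ Set.Icc a (a+1), deriv E y ≤ M := fun y hy => hzmax hy
  have hMpos : 0 < M := (hape z hz.1).1
  -- N such that E (a + N) ≥ M
  obtain ⟨x₀, hx₀⟩ := eventually_atTop.1 (htop.eventually_ge_atTop M)
  obtain ⟨N, hN⟩ := exists_nat_ge (x₀ - a)
  have hEN : M ≤ E (a + N) := hx₀ _ (by linarith)
  -- invariant with constant M
  have hB : ∀ y, a ≤ y → y ≤ a + 1 → ∀ n : ℕ,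
      deriv E (y + n) ≤ M * Real.exp (2 * E (y + n)) := by
    intro y hy1 hy2 n
    induction n with
    | zero =>
      simp only [Nat.cast_zero, add_zero]
      have h1 : deriv E y ≤ M := hM y ⟨hy1, hy2⟩
      have h2 : (1:ℝ) ≤ Real.exp (2 * E y) :=
        Real.one_le_exp (by have := (hape y hy1).2; linarith)
      nlinarith
    | succ n ih =>
      have hn0 : (0:ℝ) ≤ (n:ℝ) := Nat.cast_nonneg n
      have hyn : (1:ℝ) ≤ y + n := by linarith
      have hcast : y + ((n+1 : ℕ) : ℝ) = (y + n) + 1 := by push_cast; ring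
      have hEeq : E ((y + n) + 1) = Real.exp (E (y + n)) := hK (y + n) (by linarith)
      rw [hcast, hrec (y + n) hyn, hEeq]
      have hexp := Real.exp_nonneg (E (y + n))
      calc Real.exp (E (y + n)) * deriv E (y + n)
          ≤ Real.exp (E (y + n)) * (M * Real.exp (2 * E (y + n))) := by
            apply mul_le_mul_of_nonneg_left ih hexp
        _ = M * Real.exp (3 * E (y + n)) := by
            rw [show (3:ℝ) * E (y+n) = E (y+n) + 2 * E (y+n) by ring, Real.exp_add]; ring
        _ ≤ M * Real.exp (2 * Real.exp (E (y + n))) := by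
            apply mul_le_mul_of_nonneg_left _ hMpos.le
            apply Real.exp_le_exp.2
            have h1 := htwo (E (y+n)); have h2 := (hlt (E (y+n))).le
            linarith
  -- clean invariant, strict, after N steps
  have hC : ∀ y, a ≤ y → y ≤ a + 1 → ∀ m : ℕ, N ≤ m →
      deriv E (y + ((m+1 : ℕ) : ℝ)) < Real.exp (2 * E (y + ((m+1 : ℕ) : ℝ))) := by
    intro y hy1 hy2 m hm
    have hm0 : (0:ℝ) ≤ (m:ℝ) := Nat.cast_nonneg m
    have hmN : (N:ℝ) ≤ (m:ℝ) := Nat.cast_le.2 hm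
    set t : ℝ := E (y + m) with ht_def
    have ht : M ≤ t := le_trans hEN (hmono (Set.mem_Ici.2 (by linarith))
      (Set.mem_Ici.2 (by linarith)) (by linarith))
    have hym : (1:ℝ) ≤ y + m := by linarith
    have hcast : y + ((m+1 : ℕ) : ℝ) = (y + m) + 1 := by push_cast; ring
    have hEeq : E ((y + m) + 1) = Real.exp t := hK (y + m) (by linarith)
    rw [hcast, hrec (y + m) hym, hEeq]
    have hBm := hB y hy1 hy2 m
    have hexp := Real.exp_pos t
    have hexp3 := Real.exp_pos (3 * t)
    calc Real.exp t * deriv E (y + m)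
        ≤ Real.exp t * (M * Real.exp (2 * t)) :=
          mul_le_mul_of_nonneg_left hBm hexp.le
      _ = M * Real.exp (3 * t) := by
          rw [show (3:ℝ) * t = t + 2 * t by ring, Real.exp_add]; ring
      _ ≤ t * Real.exp (3 * t) := mul_le_mul_of_nonneg_right ht hexp3.le
      _ < Real.exp t * Real.exp (3 * t) := mul_lt_mul_of_pos_right (hlt t) hexp3
      _ = Real.exp (4 * t) := by
          rw [← Real.exp_add]; ring_nf
      _ ≤ Real.exp (2 * Real.exp t) := by
          apply Real.exp_le_exp.2
          have := htwo t; linarith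
  -- conclusion
  rw [eventually_atTop]
  refine ⟨a + N + 2, fun x hx => ?_⟩
  have hN0 : (0:ℝ) ≤ (N:ℝ) := Nat.cast_nonneg N
  set zz : ℝ := x - 1 with hz_def
  have hzz : a + N + 1 ≤ zz := by simp only [hz_def]; linarith
  have hza : a ≤ zz := by linarith
  set m : ℕ := ⌊zz - a⌋₊ with hm_def
  have hmle : (m:ℝ) ≤ zz - a := Nat.floor_le (by linarith)
  have hmgt : zz - a < m + 1 := Nat.lt_floor_add_one _
  set y : ℝ := zz - m with hy_def
  have hy1 : a ≤ y := by simp only [hy_def]; linarith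
  have hy2 : y ≤ a + 1 := by simp only [hy_def]; linarith
  have hmN : N + 1 ≤ m := Nat.le_floor (by push_cast; linarith)
  obtain ⟨k, hk⟩ : ∃ k, m = k + 1 := ⟨m - 1, by omega⟩
  have hkN : N ≤ k := by omega
  have hCz : deriv E zz < Real.exp (2 * E zz) := by
    have h := hC y hy1 hy2 k hkN
    have heq : y + ((k+1 : ℕ) : ℝ) = zz := by
      rw [hy_def, hk]; push_cast; ring
    rwa [heq] at h
  have hz1 : (1:ℝ) ≤ zz := by linarith
  have hEx : E (zz + 1) = Real.exp (E zz) := hK zz (by linarith)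
  have hx1 : x = zz + 1 := by simp [hz_def]
  calc deriv E x = Real.exp (E zz) * deriv E zz := by rw [hx1, hrec zz hz1]
    _ < Real.exp (E zz) * Real.exp (2 * E zz) :=
        mul_lt_mul_of_pos_left hCz (Real.exp_pos _)
    _ = Real.exp (E zz) ^ 3 := by
        rw [← Real.exp_add, show E zz + 2 * E zz = E zz + (E zz + E zz) by ring,
          Real.exp_add, Real.exp_add]; ring
    _ = E x ^ 3 := by rw [hx1, hEx]
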